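/- arXiv:1301.7279 — 2 statements merged into one kernel-verified Lean document; each statement's English description precedes it below -/
import Mathlib

section
/- Let φ ⊂ ℝ² × M be admissible, let f : φ → [0, ∞] be its unique growth function, and assume f(x) < ∞ for all x ∈ φ. Then there exists a map h_c : φ → φ, with associated geometric descendant h_g(x) defined as the intersection point (ξ + [0,∞)·v) ∩ (η + [0,∞)·w) where (η,w) = h_c(x), satisfying: (hard-core) [ξ, h_g(x)) ∩ [η, h_g(y)) = ∅ for all distinct x = (ξ,v), y = (η,w) ∈ φ; (existence of stopping neighbors) for every x ∈ φ, writing y = (η,w) = h_c(x), one has h_g(x) ∈ [η, h_g(y)) and |h_g(x) − η| < |h_g(x) − ξ|. Moreover, the values h_c(x), x ∈ φ, are uniquely determined by these properties. -/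
noncomputable section

namespace Lilypond

open scoped ENNReal

/-- Marked points: a spatial position in `ℝ² = ℝ × ℝ` (with the supremum norm)
together with a mark, which is a direction vector in `ℝ²`. -/
abbrev Pt : Type := (ℝ × ℝ) × (ℝ × ℝ)

def e1 : ℝ × ℝ := (1, 0)
def e2 : ℝ × ℝ := (0, 1)

/-- The mark space `M = {e₁, −e₁, e₂, −e₂}`. -/
def Mset : Set (ℝ × ℝ) := {e1, -e1, e2, -e2}

/-- The Euclidean norm on `ℝ²` (the norm of `ℝ × ℝ` itself is the sup-norm `|·|_∞`). -/
def eNorm (p : ℝ × ℝ) : ℝ := Real.sqrt (p.1 ^ 2 + p.2 ^ 2)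

/-- The eight forbidden directions `{±e₁, ±e₂, (±e₁ ± e₂)/√2}`. -/
def badDirs : Set (ℝ × ℝ) :=
  {e1, -e1, e2, -e2, (Real.sqrt 2)⁻¹ • (e1 + e2), (Real.sqrt 2)⁻¹ • (e1 - e2),
    (Real.sqrt 2)⁻¹ • (-e1 + e2), (Real.sqrt 2)⁻¹ • (-e1 - e2)}

/-- The set of spatial positions of a marked configuration. -/
def pos (φ : Set Pt) : Set (ℝ × ℝ) := Prod.fst '' φ

/-- `A` contains an (infinite) anisotropic descending chain: there are `b > 0` and pairwise
distinct points `ξ₀, ξ₁, ξ₂, …` of `A` with `|ξ₀ − ξ₁|_∞ ≤ b` and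
`|ξ_{i+1} − ξ_i|_∞ < |ξ_i − ξ_{i−1}|_∞` for all `i ≥ 1`. -/
def HasInfDescChain (A : Set (ℝ × ℝ)) : Prop :=
  ∃ b > (0 : ℝ), ∃ ξ : ℕ → ℝ × ℝ, Function.Injective ξ ∧ (∀ i, ξ i ∈ A) ∧
    ‖ξ 0 - ξ 1‖ ≤ b ∧ ∀ i, 1 ≤ i → ‖ξ (i + 1) - ξ i‖ < ‖ξ i - ξ (i - 1)‖

/-- Local finiteness of a marked configuration. -/
def LocFin (φ : Set Pt) : Prop := ∀ r : ℝ, {x ∈ φ | ‖x.1‖ ≤ r}.Finite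

/-- A marked set `φ ⊂ ℝ² × M` is admissible: it is locally finite, all marks lie in `M`,
its set of spatial positions contains no anisotropic descending chain, and
`(ξ − η)/|ξ − η| ∉ {±e₁, ±e₂, (±e₁ ± e₂)/√2}` (Euclidean normalization) for all distinct
`x = (ξ,v), y = (η,w) ∈ φ`. -/
def Admissible (φ : Set Pt) : Prop :=
  LocFin φ ∧ (∀ x ∈ φ, x.2 ∈ Mset) ∧ ¬ HasInfDescChain (pos φ) ∧
    ∀ x ∈ φ, ∀ y ∈ φ, x ≠ y → (eNorm (x.1 - y.1))⁻¹ • (x.1 - y.1) ∉ badDirs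

/-- The half-open growth segment `[ξ, ξ + l·v)`, interpreted as the full ray
`ξ + [0,∞)·v` when `l = ∞`. -/
def seg (ξ v : ℝ × ℝ) (l : ℝ≥0∞) : Set (ℝ × ℝ) :=
  {p | ∃ t : ℝ, 0 ≤ t ∧ ENNReal.ofReal t < l ∧ p = ξ + t • v}

/-- The tip `ξ + f(x)·v` of the (finite) segment grown from `x = (ξ, v)`. -/
def tip (f : Pt → ℝ≥0∞) (x : Pt) : ℝ × ℝ := x.1 + (f x).toReal • x.2

/-- `y = (η, w)` is a stopping neighbor of `x = (ξ, v)` in `φ` (w.r.t. the growth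
function `f`): `y ∈ φ`, `ξ + f(x)v ∈ [η, η + f(y)w)` and `|ξ + f(x)v − η| < f(x)`
(Euclidean norm). -/
def IsStopNbr (φ : Set Pt) (f : Pt → ℝ≥0∞) (x y : Pt) : Prop :=
  y ∈ φ ∧ tip f x ∈ seg y.1 y.2 (f y) ∧ eNorm (tip f x - y.1) < (f x).toReal

/-- `f` is a growth function for `φ`: the half-open segments `[ξ, ξ + f(x)v)` are pairwise
disjoint (hard-core property), every `x ∈ φ` with `f(x) < ∞` has a unique stopping
neighbor, and (as a normalization identifying `f` with a function on `φ`) `f` vanishes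
off `φ`. -/
def IsGrowthFn (φ : Set Pt) (f : Pt → ℝ≥0∞) : Prop :=
  (∀ x ∈ φ, ∀ y ∈ φ, x ≠ y → seg x.1 x.2 (f x) ∩ seg y.1 y.2 (f y) = ∅) ∧
  (∀ x ∈ φ, f x ≠ ⊤ → ∃! y, IsStopNbr φ f x y) ∧
  (∀ x, x ∉ φ → f x = 0)

open Classical in
/-- The growth function `f_φ` of a configuration (chosen by choice; it is unique on
admissible configurations). -/
def growthFn (φ : Set Pt) : Pt → ℝ≥0∞ :=
  if h : ∃ f, IsGrowthFn φ f then h.choose else fun _ => 0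

/-- `N′`: nonempty admissible configurations possessing a growth function which is
finite everywhere on the configuration. -/
def Nprime (φ : Set Pt) : Prop :=
  φ.Nonempty ∧ Admissible φ ∧ (∃ f, IsGrowthFn φ f) ∧ ∀ x ∈ φ, growthFn φ x ≠ ⊤

open Classical in
/-- The combinatorial descendant `h_c(φ, x)`: the (unique) stopping neighbor of `x`
in `φ`. -/
def hc (φ : Set Pt) (x : Pt) : Pt :=
  if h : ∃ y, IsStopNbr φ (growthFn φ) x y then h.choose else x

/-- The geometric descendant `h_g(φ, x) = ξ + f_φ(x)·v`. -/
def hg (φ : Set Pt) (x : Pt) : ℝ × ℝ := tip (growthFn φ) x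

/-- The closed segment `I(φ, x) = [ξ, h_g(φ, x)]`. -/
def I (φ : Set Pt) (x : Pt) : Set (ℝ × ℝ) := segment ℝ x.1 (hg φ x)


/-- The ray `ξ + [0,∞)·v`. -/
def ray (ξ v : ℝ × ℝ) : Set (ℝ × ℝ) := {p | ∃ t : ℝ, 0 ≤ t ∧ p = ξ + t • v}

/-- The half-open segment `[ξ, p)` from `ξ` towards `p`. -/
def segTo (ξ p : ℝ × ℝ) : Set (ℝ × ℝ) := {q | ∃ t : ℝ, 0 ≤ t ∧ t < 1 ∧ q = ξ + t • (p - ξ)}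

/-- The defining properties of the combinatorial descendant map `h_c` on `φ`, together
with its associated geometric descendant `h_g`: `h_c` maps `φ` to `φ`; `h_g(x)` is an
intersection point of the rays emanating from `x` and from `h_c(x)`; the half-open
segments `[ξ, h_g(x))` are pairwise disjoint (hard-core property); and
`h_g(x) ∈ [η, h_g(y))` with `|h_g(x) − η| < |h_g(x) − ξ|` (Euclidean norm), where
`y = (η, w) = h_c(x)` (existence of stopping neighbors). -/
def HcSpec (φ : Set Pt) (hcm : Pt → Pt) (hgm : Pt → ℝ × ℝ) : Prop :=
  (∀ x ∈ φ, hcm x ∈ φ ∧ hgm x ∈ ray x.1 x.2 ∧ hgm x ∈ ray (hcm x).1 (hcm x).2) ∧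
  (∀ x ∈ φ, ∀ y ∈ φ, x ≠ y → segTo x.1 (hgm x) ∩ segTo y.1 (hgm y) = ∅) ∧
  (∀ x ∈ φ, hgm x ∈ segTo (hcm x).1 (hgm (hcm x)) ∧
    eNorm (hgm x - (hcm x).1) < eNorm (hgm x - x.1))

/-! ### Auxiliary lemmas -/

def Sreal (ξ v : ℝ × ℝ) (L : ℝ) : Set (ℝ × ℝ) := {p | ∃ t : ℝ, 0 ≤ t ∧ t < L ∧ p = ξ + t • v}

lemma mark_cases {v : ℝ × ℝ} (h : v ∈ Mset) :
    v = ((1:ℝ), (0:ℝ)) ∨ v = (-1, 0) ∨ v = (0, 1) ∨ v = (0, -1) := by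
  simpa [Mset, e1, e2, Prod.ext_iff] using h

lemma mark_axis {v : ℝ × ℝ} (h : v ∈ Mset) :
    (v.2 = 0 ∧ |v.1| = 1) ∨ (v.1 = 0 ∧ |v.2| = 1) := by
  rcases mark_cases h with rfl | rfl | rfl | rfl <;> norm_num

lemma mark_ne_zero {v : ℝ × ℝ} (h : v ∈ Mset) : v ≠ 0 := by
  rcases mark_cases h with rfl | rfl | rfl | rfl <;> simp [Prod.ext_iff]

lemma eNorm_smul (t : ℝ) (p : ℝ × ℝ) : eNorm (t • p) = |t| * eNorm p := by
  simp only [eNorm, Prod.smul_fst, Prod.smul_snd, smul_eq_mul, mul_pow]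
  rw [← mul_add, Real.sqrt_mul (sq_nonneg t), Real.sqrt_sq_eq_abs]

lemma eNorm_mark {v : ℝ × ℝ} (h : v ∈ Mset) : eNorm v = 1 := by
  rcases mark_cases h with rfl | rfl | rfl | rfl <;> simp [eNorm] <;> norm_num

lemma eNorm_smul_mark {v : ℝ × ℝ} (h : v ∈ Mset) {t : ℝ} (ht : 0 ≤ t) : eNorm (t • v) = t := by
  rw [eNorm_smul, eNorm_mark h, mul_one, abs_of_nonneg ht]

lemma param_eq {ξ v : ℝ × ℝ} (hv : v ≠ 0) {s t : ℝ} (h : ξ + s • v = ξ + t • v) : s = t := by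
  have h2 : (s - t) • v = 0 := by
    have := add_left_cancel h
    rw [sub_smul, this, sub_self]
  rcases smul_eq_zero.1 h2 with h3 | h3
  · linarith [sub_eq_zero.1 (by linarith [abs_nonneg (s-t)] : s - t = 0)]
  · exact absurd h3 hv

lemma norm_pair (p q : ℝ) : ‖((p, q) : ℝ × ℝ)‖ = max |p| |q| := by
  rw [Prod.norm_def]; simp [Real.norm_eq_abs]

lemma eNorm_pair1 (c : ℝ) : eNorm (c, 0) = |c| := by
  simp [eNorm, Real.sqrt_sq_eq_abs]

lemma eNorm_pair2 (c : ℝ) : eNorm (0, c) = |c| := by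
  simp [eNorm, Real.sqrt_sq_eq_abs]

lemma normalized_axis1 {c : ℝ} (hc : c ≠ 0) : (eNorm (c, 0))⁻¹ • ((c, 0) : ℝ × ℝ) ∈ badDirs := by
  rw [eNorm_pair1]
  rcases hc.lt_or_gt with h | h
  · have : (|c|⁻¹ • ((c, 0) : ℝ × ℝ)) = -e1 := by
      rw [abs_of_neg h]; simp [Prod.smul_mk, e1, Prod.ext_iff]
      field_simp
    rw [this]; simp [badDirs]
  · have : (|c|⁻¹ • ((c, 0) : ℝ × ℝ)) = e1 := by
      rw [abs_of_pos h]; simp [Prod.smul_mk, e1, Prod.ext_iff]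
      field_simp
    rw [this]; simp [badDirs]

lemma normalized_axis2 {c : ℝ} (hc : c ≠ 0) : (eNorm (0, c))⁻¹ • ((0, c) : ℝ × ℝ) ∈ badDirs := by
  rw [eNorm_pair2]
  rcases hc.lt_or_gt with h | h
  · have : (|c|⁻¹ • ((0, c) : ℝ × ℝ)) = -e2 := by
      rw [abs_of_neg h]; simp [Prod.smul_mk, e2, Prod.ext_iff]
      field_simp
    rw [this]; simp [badDirs]
  · have : (|c|⁻¹ • ((0, c) : ℝ × ℝ)) = e2 := by
      rw [abs_of_pos h]; simp [Prod.smul_mk, e2, Prod.ext_iff]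
      field_simp
    rw [this]; simp [badDirs]



lemma eNorm_nonneg (p : ℝ × ℝ) : 0 ≤ eNorm p := Real.sqrt_nonneg _

lemma segTo_eq {ξ v : ℝ × ℝ} {L : ℝ} (hL : 0 < L) : segTo ξ (ξ + L • v) = Sreal ξ v L := by
  ext p
  constructor
  · rintro ⟨t, ht0, ht1, rfl⟩
    refine ⟨t * L, mul_nonneg ht0 hL.le, by nlinarith, ?_⟩
    rw [add_sub_cancel_left, smul_smul]
  · rintro ⟨s, hs0, hsL, rfl⟩
    refine ⟨s / L, div_nonneg hs0 hL.le, (div_lt_one hL).2 hsL, ?_⟩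
    rw [add_sub_cancel_left, smul_smul, div_mul_cancel₀ _ hL.ne']

lemma seg_eq {ξ v : ℝ × ℝ} {l : ℝ≥0∞} (hl : l ≠ ⊤) : seg ξ v l = Sreal ξ v l.toReal := by
  ext p
  simp only [seg, Sreal, Set.mem_setOf_eq]
  constructor
  · rintro ⟨t, ht, h1, rfl⟩
    exact ⟨t, ht, (ENNReal.ofReal_lt_iff_lt_toReal ht hl).mp h1, rfl⟩
  · rintro ⟨t, ht, h1, rfl⟩
    exact ⟨t, ht, (ENNReal.ofReal_lt_iff_lt_toReal ht hl).mpr h1, rfl⟩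
lemma norm_prod (p : ℝ × ℝ) : ‖p‖ = max |p.1| |p.2| := by
  rw [Prod.norm_def]; simp [Real.norm_eq_abs]

lemma norm_cross {v w : ℝ × ℝ} (hv : v ∈ Mset) (hw : w ∈ Mset) {A S : ℝ}
    (hA : 0 < A) (hS : 0 ≤ S) (hSA : S < A)
    (hbad : (eNorm (S • w - A • v))⁻¹ • (S • w - A • v) ∉ badDirs) :
    ‖S • w - A • v‖ = A := by
  set d := S • w - A • v with hd
  have hd1 : d.1 = S * w.1 - A * v.1 := by simp [hd]
  have hd2 : d.2 = S * w.2 - A * v.2 := by simp [hd]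
  rcases mark_axis hv with ⟨hv2, hv1⟩ | ⟨hv1, hv2⟩ <;>
    rcases mark_axis hw with ⟨hw2, hw1⟩ | ⟨hw1, hw2⟩
  · -- both along e1 : contradiction with badDirs
    exfalso
    have h1 : |A * v.1| = A := by rw [abs_mul, hv1, abs_of_pos hA, mul_one]
    have h2 : |S * w.1| = S := by rw [abs_mul, hw1, abs_of_nonneg hS, mul_one]
    have h3 := abs_sub_abs_le_abs_sub (A * v.1) (S * w.1)
    rw [h1, h2, abs_sub_comm] at h3
    have hne : d.1 ≠ 0 := by
      rw [hd1]; intro h0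
      rw [h0] at h3; simp at h3; linarith
    have hdp : d = (d.1, 0) := by
      have h4 : d.2 = 0 := by rw [hd2, hv2, hw2]; ring
      exact Prod.ext_iff.mpr ⟨rfl, h4⟩
    rw [hdp] at hbad
    exact hbad (normalized_axis1 hne)
  · -- v along e1, w along e2
    have h1 : |d.1| = A := by
      rw [hd1, hw1, mul_zero, zero_sub, abs_neg, abs_mul, hv1, abs_of_pos hA, mul_one]
    have h2 : |d.2| = S := by
      rw [hd2, hv2, mul_zero, sub_zero, abs_mul, hw2, abs_of_nonneg hS, mul_one]
    rw [norm_prod, h1, h2, max_eq_left hSA.le]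
  · -- v along e2, w along e1
    have h1 : |d.1| = S := by
      rw [hd1, hv1, mul_zero, sub_zero, abs_mul, hw1, abs_of_nonneg hS, mul_one]
    have h2 : |d.2| = A := by
      rw [hd2, hw2, mul_zero, zero_sub, abs_neg, abs_mul, hv2, abs_of_pos hA, mul_one]
    rw [norm_prod, h1, h2, max_eq_right hSA.le]
  · -- both along e2 : contradiction
    exfalso
    have h1 : |A * v.2| = A := by rw [abs_mul, hv2, abs_of_pos hA, mul_one]
    have h2 : |S * w.2| = S := by rw [abs_mul, hw2, abs_of_nonneg hS, mul_one]
    have h3 := abs_sub_abs_le_abs_sub (A * v.2) (S * w.2)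
    rw [h1, h2, abs_sub_comm] at h3
    have hne : d.2 ≠ 0 := by
      rw [hd2]; intro h0
      rw [h0] at h3; simp at h3; linarith
    have hdp : d = (0, d.2) := by
      have h4 : d.1 = 0 := by rw [hd1, hv1, hw1]; ring
      exact Prod.ext_iff.mpr ⟨h4, rfl⟩
    rw [hdp] at hbad
    exact hbad (normalized_axis2 hne)
lemma step_asym {φ : Set Pt} (hφ : Admissible φ) {a b : Pt → ℝ}
    (ha0 : ∀ x ∈ φ, 0 < a x) (hb0 : ∀ x ∈ φ, 0 < b x)
    (hbHC : ∀ x ∈ φ, ∀ y ∈ φ, x ≠ y → Sreal x.1 x.2 (b x) ∩ Sreal y.1 y.2 (b y) = ∅)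
    (haSN : ∀ x ∈ φ, ∃ y ∈ φ, (x.1 + a x • x.2) ∈ Sreal y.1 y.2 (a y) ∧
      eNorm (x.1 + a x • x.2 - y.1) < a x)
    {x : Pt} (hx : x ∈ φ) (hlt : a x < b x) :
    ∃ y ∈ φ, b y < a y ∧ ‖x.1 - y.1‖ = a x ∧ b y < a x := by
  obtain ⟨y, hy, ⟨s, hs0, hsay, hts⟩, hne⟩ := haSN x hx
  have hvM := hφ.2.1 x hx
  have hwM := hφ.2.1 y hy
  have hxy : x ≠ y := by
    rintro rfl
    exact absurd (param_eq (mark_ne_zero hvM) hts) (by linarith)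
  have hsval : eNorm (x.1 + a x • x.2 - y.1) = s := by
    rw [hts, add_sub_cancel_left, eNorm_smul_mark hwM hs0]
  have hslt : s < a x := hsval ▸ hne
  have hbys : b y ≤ s := by
    by_contra hcon
    push_neg at hcon
    have m1 : (x.1 + a x • x.2) ∈ Sreal y.1 y.2 (b y) := ⟨s, hs0, hcon, hts⟩
    have m2 : (x.1 + a x • x.2) ∈ Sreal x.1 x.2 (b x) := ⟨a x, (ha0 x hx).le, hlt, rfl⟩
    have := hbHC x hx y hy hxy
    exact Set.eq_empty_iff_forall_notMem.mp this _ ⟨m2, m1⟩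
  refine ⟨y, hy, lt_of_le_of_lt hbys hsay, ?_, lt_of_le_of_lt hbys hslt⟩
  have hdiff : x.1 - y.1 = s • y.2 - a x • x.2 := by
    have h5 : x.1 = y.1 + s • y.2 - a x • x.2 := by rw [← hts]; abel
    rw [h5]; abel
  rw [hdiff]
  exact norm_cross hvM hwM (ha0 x hx) hs0 hslt
    (by rw [← hdiff]; exact hφ.2.2.2 x hx y hy hxy)
lemma growth_unique {φ : Set Pt} (hφ : Admissible φ) {a b : Pt → ℝ}
    (ha0 : ∀ x ∈ φ, 0 < a x) (hb0 : ∀ x ∈ φ, 0 < b x)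
    (haHC : ∀ x ∈ φ, ∀ y ∈ φ, x ≠ y → Sreal x.1 x.2 (a x) ∩ Sreal y.1 y.2 (a y) = ∅)
    (hbHC : ∀ x ∈ φ, ∀ y ∈ φ, x ≠ y → Sreal x.1 x.2 (b x) ∩ Sreal y.1 y.2 (b y) = ∅)
    (haSN : ∀ x ∈ φ, ∃ y ∈ φ, (x.1 + a x • x.2) ∈ Sreal y.1 y.2 (a y) ∧
      eNorm (x.1 + a x • x.2 - y.1) < a x)
    (hbSN : ∀ x ∈ φ, ∃ y ∈ φ, (x.1 + b x • x.2) ∈ Sreal y.1 y.2 (b y) ∧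
      eNorm (x.1 + b x • x.2 - y.1) < b x) :
    ∀ x ∈ φ, a x = b x := by
  by_contra hcon
  push_neg at hcon
  obtain ⟨x₀, hx₀, hab₀⟩ := hcon
  have posinj : ∀ x ∈ φ, ∀ y ∈ φ, x.1 = y.1 → x = y := by
    intro x hx y hy hxy
    by_contra hne
    have m1 : x.1 ∈ Sreal x.1 x.2 (a x) := ⟨0, le_refl 0, ha0 x hx, by simp⟩
    have m2 : x.1 ∈ Sreal y.1 y.2 (a y) := ⟨0, le_refl 0, ha0 y hy, by simp [hxy]⟩
    exact Set.eq_empty_iff_forall_notMem.mp (haHC x hx y hy hne) _ ⟨m1, m2⟩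
  have step : ∀ t : {x : Pt // x ∈ φ ∧ a x ≠ b x}, ∃ t' : {x : Pt // x ∈ φ ∧ a x ≠ b x},
      ‖t.1.1 - t'.1.1‖ = min (a t.1) (b t.1) ∧
        min (a t'.1) (b t'.1) < min (a t.1) (b t.1) := by
    rintro ⟨x, hx, hab⟩
    rcases lt_or_gt_of_ne hab with h | h
    · obtain ⟨y, hy, h1, h2, h3⟩ := step_asym hφ ha0 hb0 hbHC haSN hx h
      refine ⟨⟨y, hy, (ne_of_gt h1)⟩, ?_, ?_⟩
      · simpa [min_eq_left h.le] using h2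
      · simp only [min_eq_left h.le]
        calc min (a y) (b y) ≤ b y := min_le_right _ _
          _ < a x := h3
    · obtain ⟨y, hy, h1, h2, h3⟩ := step_asym hφ hb0 ha0 haHC hbSN hx h
      refine ⟨⟨y, hy, (ne_of_lt h1)⟩, ?_, ?_⟩
      · simpa [min_eq_right h.le] using h2
      · simp only [min_eq_right h.le]
        calc min (a y) (b y) ≤ a y := min_le_left _ _
          _ < b x := h3
  let F := fun t => (step t).choose
  have hF1 : ∀ t, ‖t.1.1 - (F t).1.1‖ = min (a t.1) (b t.1) := fun t => (step t).choose_spec.1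
  have hF2 : ∀ t, min (a (F t).1) (b (F t).1) < min (a t.1) (b t.1) :=
    fun t => (step t).choose_spec.2
  let u : ℕ → {x : Pt // x ∈ φ ∧ a x ≠ b x} := fun n => F^[n] ⟨x₀, hx₀, hab₀⟩
  have hu : ∀ n, u (n + 1) = F (u n) := fun n => Function.iterate_succ_apply' F n _
  let m : ℕ → ℝ := fun n => min (a (u n).1) (b (u n).1)
  have hmdec : StrictAnti m := by
    apply strictAnti_nat_of_succ_lt
    intro n
    show min (a (u (n+1)).1) (b (u (n+1)).1) < _
    rw [hu n]
    exact hF2 (u n)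
  have hnorm : ∀ n, ‖(u n).1.1 - (u (n + 1)).1.1‖ = m n := by
    intro n
    rw [hu n]
    exact hF1 (u n)
  refine hφ.2.2.1 ⟨m 0, lt_min (ha0 _ (u 0).2.1) (hb0 _ (u 0).2.1),
    fun n => (u n).1.1, ?_, fun i => ⟨(u i).1, (u i).2.1, rfl⟩, (hnorm 0).le, ?_⟩
  · intro i j hij
    have hpt : (u i).1 = (u j).1 := posinj _ (u i).2.1 _ (u j).2.1 hij
    exact hmdec.injective (by simp only [m, hpt])
  · intro i hi
    have hpred : i - 1 + 1 = i := Nat.succ_pred_eq_of_pos hi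
    have h2 := hnorm (i - 1)
    rw [hpred] at h2
    show ‖(u (i+1)).1.1 - (u i).1.1‖ < ‖(u i).1.1 - (u (i-1)).1.1‖
    calc ‖(u (i+1)).1.1 - (u i).1.1‖ = m i := by rw [norm_sub_rev]; exact hnorm i
      _ < m (i - 1) := hmdec (by omega)
      _ = ‖(u i).1.1 - (u (i-1)).1.1‖ := by rw [norm_sub_rev]; exact h2.symm

theorem exists_hc_spec' (φ : Set Pt) (hφ : Admissible φ) (f : Pt → ℝ≥0∞)
    (hf : IsGrowthFn φ f) (hfin : ∀ x ∈ φ, f x ≠ ⊤) :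
    ∃ hcm : Pt → Pt, ∃ hgm : Pt → ℝ × ℝ, HcSpec φ hcm hgm ∧
      ∀ hcm' : Pt → Pt, ∀ hgm' : Pt → ℝ × ℝ, HcSpec φ hcm' hgm' →
        ∀ x ∈ φ, hcm' x = hcm x := by
  classical
  obtain ⟨hHC, hSN, -⟩ := hf
  have hfr : ∀ x ∈ φ, 0 < (f x).toReal := by
    intro x hx
    obtain ⟨y, hy⟩ := (hSN x hx (hfin x hx)).exists
    exact lt_of_le_of_lt (eNorm_nonneg _) hy.2.2
  have hsegeq : ∀ x ∈ φ, seg x.1 x.2 (f x) = Sreal x.1 x.2 (f x).toReal :=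
    fun x hx => seg_eq (hfin x hx)
  set hcm : Pt → Pt := fun x => if h : ∃ y, IsStopNbr φ f x y then h.choose else x with hhcm
  have hcm_spec : ∀ x ∈ φ, IsStopNbr φ f x (hcm x) := by
    intro x hx
    have h := (hSN x hx (hfin x hx)).exists
    show IsStopNbr φ f x (if h : ∃ y, IsStopNbr φ f x y then h.choose else x)
    rw [dif_pos h]
    exact h.choose_spec
  have hcm_uniq : ∀ x ∈ φ, ∀ y, IsStopNbr φ f x y → y = hcm x := by
    intro x hx y hy
    exact (hSN x hx (hfin x hx)).unique hy (hcm_spec x hx)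
  set hgm : Pt → ℝ × ℝ := fun x => tip f x with hhgm
  have htip : ∀ x, hgm x = x.1 + (f x).toReal • x.2 := fun x => rfl
  have hsegTo : ∀ x ∈ φ, segTo x.1 (hgm x) = Sreal x.1 x.2 (f x).toReal := by
    intro x hx
    rw [htip x]
    exact segTo_eq (hfr x hx)
  refine ⟨hcm, hgm, ⟨?_, ?_, ?_⟩, ?_⟩
  · -- maps to φ, ray memberships
    intro x hx
    obtain ⟨hyφ, hmem, -⟩ := hcm_spec x hx
    refine ⟨hyφ, ⟨(f x).toReal, ENNReal.toReal_nonneg, htip x⟩, ?_⟩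
    obtain ⟨t, ht, -, htp⟩ := hmem
    exact ⟨t, ht, htp⟩
  · -- hard core
    intro x hx y hy hxy
    rw [hsegTo x hx, hsegTo y hy, ← hsegeq x hx, ← hsegeq y hy]
    exact hHC x hx y hy hxy
  · -- stopping
    intro x hx
    obtain ⟨hyφ, hmem, hlt⟩ := hcm_spec x hx
    constructor
    · rw [hsegTo _ hyφ, ← hsegeq _ hyφ]
      exact hmem
    · show eNorm (tip f x - (hcm x).1) < eNorm (tip f x - x.1)
      have : eNorm (tip f x - x.1) = (f x).toReal := by
        rw [tip, add_sub_cancel_left, eNorm_smul_mark (hφ.2.1 x hx) ENNReal.toReal_nonneg]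
      rw [this]
      exact hlt
  · -- uniqueness
    intro hcm' hgm' hspec x hx
    obtain ⟨s1, s2, s3⟩ := hspec
    set gr : Pt → ℝ := fun z => eNorm (hgm' z - z.1) with hgr
    have hgr_eq : ∀ z ∈ φ, hgm' z = z.1 + gr z • z.2 := by
      intro z hz
      obtain ⟨t, ht, hzt⟩ := (s1 z hz).2.1
      have hgt : gr z = t := by
        show eNorm (hgm' z - z.1) = t
        rw [hzt, add_sub_cancel_left, eNorm_smul_mark (hφ.2.1 z hz) ht]
      rw [hgt, ← hzt]
    have hgr0 : ∀ z ∈ φ, 0 < gr z :=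
      fun z hz => lt_of_le_of_lt (eNorm_nonneg _) (s3 z hz).2
    have hgrsegTo : ∀ z ∈ φ, segTo z.1 (hgm' z) = Sreal z.1 z.2 (gr z) := by
      intro z hz
      rw [hgr_eq z hz]
      exact segTo_eq (hgr0 z hz)
    have key : ∀ z ∈ φ, gr z = (f z).toReal := by
      apply growth_unique hφ hgr0 hfr
      · intro z hz y hy hzy
        rw [← hgrsegTo z hz, ← hgrsegTo y hy]
        exact s2 z hz y hy hzy
      · intro z hz y hy hzy
        rw [← hsegeq z hz, ← hsegeq y hy]
        exact hHC z hz y hy hzy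
      · intro z hz
        refine ⟨hcm' z, (s1 z hz).1, ?_, ?_⟩
        · rw [← hgrsegTo _ (s1 z hz).1, ← hgr_eq z hz]
          exact (s3 z hz).1
        · rw [← hgr_eq z hz]
          exact (s3 z hz).2
      · intro z hz
        obtain ⟨hyφ, hmem, hlt⟩ := hcm_spec z hz
        refine ⟨hcm z, hyφ, ?_, ?_⟩
        · rw [← hsegeq _ hyφ]
          exact hmem
        · exact hlt
    have htip' : hgm' x = tip f x := by
      rw [hgr_eq x hx, key x hx]; rfl
    apply hcm_uniq x hx
    refine ⟨(s1 x hx).1, ?_, ?_⟩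
    · rw [hsegeq _ (s1 x hx).1, ← key _ (s1 x hx).1, ← hgrsegTo _ (s1 x hx).1, ← htip']
      exact (s3 x hx).1
    · rw [← htip', ← key x hx]
      exact (s3 x hx).2

/-- Corollary: existence and uniqueness of the combinatorial
descendant.  Let `φ` be admissible with (unique) growth function `f`, finite on `φ`.
Then there exist `h_c : φ → φ` and an associated geometric descendant `h_g` satisfying
the hard-core property and the existence of stopping neighbors; moreover the values
`h_c(x)`, `x ∈ φ`, are uniquely determined by these properties. -/
theorem exists_hc_spec (φ : Set Pt) (hφ : Admissible φ) (f : Pt → ℝ≥0∞)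
    (hf : IsGrowthFn φ f) (hfin : ∀ x ∈ φ, f x ≠ ⊤) :
    ∃ hcm : Pt → Pt, ∃ hgm : Pt → ℝ × ℝ, HcSpec φ hcm hgm ∧
      ∀ hcm' : Pt → Pt, ∀ hgm' : Pt → ℝ × ℝ, HcSpec φ hcm' hgm' →
        ∀ x ∈ φ, hcm' x = hcm x := by
  exact exists_hc_spec' φ hφ f hf hfin

end Lilypond
end
end

section
/- Let δ > 0, ξ ∈ ℝ², and let φ ∈ N′ be such that φ ∩ Q^M_{3δ}(ξ) = ∅. Let D = {x₁, x₂, x₃, x₄} ⊂ ℝ² × M be a (ξ,δ)-cycle with D ∈ N′ and D ∪ φ ∈ N′. Then h_c(D ∪ φ, x_i) = h_c(D, x_i) for all i ∈ {1, 2, 3, 4}. -/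
noncomputable section

namespace Lilypond

open scoped ENNReal

/-- The square `Q_δ(ξ) = ξ + [−δ/2, δ/2]²` (a closed sup-norm ball). -/
def Qb (δ : ℝ) (ξ : ℝ × ℝ) : Set (ℝ × ℝ) := {p | ‖p - ξ‖ ≤ δ / 2}

/-- The marked square `Q^M_δ(ξ) = Q_δ(ξ) × M`. -/
def QbM (δ : ℝ) (ξ : ℝ × ℝ) : Set Pt := {x | ‖x.1 - ξ‖ ≤ δ / 2}

/-- Rotation by `π/2`. -/
def rot (v : ℝ × ℝ) : ℝ × ℝ := (-v.2, v.1)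

/-- The Euclidean inner product on `ℝ²`. -/
def dot (p q : ℝ × ℝ) : ℝ := p.1 * q.1 + p.2 * q.2

/-- `x : Fin 4 → Pt` (with pairwise distinct values) forms a `(ξ, δ)`-cycle
`D = {x₀, …, x₃} ⊂ Q^M_δ(ξ)`: consecutive marks are rotations by `π/2` of each other,
all geometric descendants within `D` lie in `Q_δ(ξ)`, `h_g(D, x_j) ∈ I(D, x_{j+1})`
cyclically, and `min(⟨ξ − ξ_j, v_j⟩, ⟨ξ − ξ_j, v_{j+1}⟩) > 0` for all `j`. -/
def IsCycle (ξ : ℝ × ℝ) (δ : ℝ) (x : Fin 4 → Pt) : Prop :=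
  Function.Injective x ∧
  (∀ j, x j ∈ QbM δ ξ) ∧
  (∀ j : Fin 4, (x j).2 = rot ((x (j + 1)).2)) ∧
  (∀ j, hg (Set.range x) (x j) ∈ Qb δ ξ) ∧
  (∀ j : Fin 4, hg (Set.range x) (x j) ∈ I (Set.range x) (x (j + 1))) ∧
  (∀ j : Fin 4, 0 < dot (ξ - (x j).1) ((x j).2) ∧ 0 < dot (ξ - (x j).1) ((x (j + 1)).2))

section Aux

lemma mset_cases {v : ℝ × ℝ} (h : v ∈ Mset) :
    v = e1 ∨ v = -e1 ∨ v = e2 ∨ v = -e2 := by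
  simpa [Mset] using h

lemma eNorm_neg (p : ℝ × ℝ) : eNorm (-p) = eNorm p := by
  simp [eNorm]

lemma eNorm_smul_mset {v : ℝ × ℝ} (h : v ∈ Mset) (c : ℝ) : eNorm (c • v) = |c| := by
  rcases mset_cases h with h | h | h | h <;> subst h <;>
    simp [eNorm, e1, e2, Prod.smul_mk, Real.sqrt_sq_eq_abs, mul_comm]

lemma norm_mset {v : ℝ × ℝ} (h : v ∈ Mset) : ‖v‖ = 1 := by
  rcases mset_cases h with h | h | h | h <;> subst h <;>
    simp [Prod.norm_def, e1, e2, Real.norm_eq_abs]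

lemma norm_smul_mset {v : ℝ × ℝ} (h : v ∈ Mset) (c : ℝ) : ‖c • v‖ = |c| := by
  rw [norm_smul, norm_mset h, Real.norm_eq_abs, mul_one]

lemma norm_le_eNorm (p : ℝ × ℝ) : ‖p‖ ≤ eNorm p := by
  have h1 : |p.1| ≤ eNorm p := by
    rw [eNorm, ← Real.sqrt_sq_eq_abs]
    exact Real.sqrt_le_sqrt (by nlinarith [sq_nonneg p.2])
  have h2 : |p.2| ≤ eNorm p := by
    rw [eNorm, ← Real.sqrt_sq_eq_abs]
    exact Real.sqrt_le_sqrt (by nlinarith [sq_nonneg p.1])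
  rw [Prod.norm_def]
  simp only [Real.norm_eq_abs]
  exact max_le h1 h2

lemma smul_cancel_mset {v : ℝ × ℝ} (h : v ∈ Mset) {s t : ℝ} (hst : s • v = t • v) : s = t := by
  rcases mset_cases h with h | h | h | h <;> subst h <;>
    simpa [e1, e2, Prod.ext_iff] using hst

lemma rot_rot (v : ℝ × ℝ) : rot (rot v) = -v := by
  simp [rot, Prod.ext_iff]

lemma rot_mset {v : ℝ × ℝ} (h : v ∈ Mset) : rot v ∈ Mset := by
  rcases mset_cases h with h | h | h | h <;> subst h <;>
    simp [rot, Mset, e1, e2, Prod.ext_iff]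

lemma perp_param {w : ℝ × ℝ} (hw : w ∈ Mset) {ξ η : ℝ × ℝ} {s t s' t' : ℝ}
    (h1 : ξ + s • rot w = η + t • w) (h2 : ξ + s' • rot w = η + t' • w) :
    s = s' ∧ t = t' := by
  have key : (s - s') • rot w = (t - t') • w := by
    linear_combination (norm := module) h1 - h2
  have k1 := congrArg Prod.fst key
  have k2 := congrArg Prod.snd key
  rcases mset_cases hw with h | h | h | h <;> subst h <;>
    simp [rot, e1, e2, Prod.smul_mk] at k1 k2 <;>
    constructor <;> linarith

end Aux
section Aux2

lemma neg_mem_mset {v : ℝ × ℝ} (h : v ∈ Mset) : -v ∈ Mset := by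
  rcases mset_cases h with h | h | h | h <;> subst h <;> simp [Mset, e1, e2, Prod.ext_iff]

lemma mset_subset_badDirs {v : ℝ × ℝ} (h : v ∈ Mset) : v ∈ badDirs := by
  rcases mset_cases h with h | h | h | h <;> subst h <;> simp [badDirs]

/-- If the difference of positions of two distinct points of an admissible set is a
nonzero multiple of a mark direction, we get a contradiction. -/
lemma badDir_contra {φ : Set Pt} (hA : Admissible φ) {a b : Pt} (ha : a ∈ φ) (hb : b ∈ φ)
    (hab : a ≠ b) {v : ℝ × ℝ} (hv : v ∈ Mset) {c : ℝ} (hc : c ≠ 0)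
    (hdiff : a.1 - b.1 = c • v) : False := by
  have hbad := hA.2.2.2 a ha b hb hab
  apply hbad
  rw [hdiff, eNorm_smul_mset hv, smul_smul]
  rcases lt_or_gt_of_ne hc with h | h
  · have : |c|⁻¹ * c = -1 := by rw [abs_of_neg h]; field_simp
    rw [this, neg_one_smul]
    exact mset_subset_badDirs (neg_mem_mset hv)
  · have : |c|⁻¹ * c = 1 := by rw [abs_of_pos h]; field_simp
    rw [this, one_smul]
    exact mset_subset_badDirs hv

lemma growthFn_spec {φ : Set Pt} (h : ∃ f, IsGrowthFn φ f) : IsGrowthFn φ (growthFn φ) := by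
  unfold growthFn
  rw [dif_pos h]
  exact h.choose_spec

lemma hc_eq {φ : Set Pt} {x y : Pt} (hx : x ∈ φ) (hgf : IsGrowthFn φ (growthFn φ))
    (hfin : growthFn φ x ≠ ⊤) (hy : IsStopNbr φ (growthFn φ) x y) : hc φ x = y := by
  have hex : ∃ z, IsStopNbr φ (growthFn φ) x z := ⟨y, hy⟩
  obtain ⟨z, _, huniq⟩ := hgf.2.1 x hx hfin
  unfold hc
  rw [dif_pos hex]
  rw [huniq _ hex.choose_spec, huniq _ hy]

end Aux2
/-- Lemma: strong external stabilization of `δ`-cycles.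
Let `δ > 0`, `ξ ∈ ℝ²` and `φ ∈ N′` with `φ ∩ Q^M_{3δ}(ξ) = ∅`.  Let `D` be a
`(ξ, δ)`-cycle with `D ∈ N′` and `D ∪ φ ∈ N′`.  Then
`h_c(D ∪ φ, x_i) = h_c(D, x_i)` for every point `x_i` of `D`. -/
theorem cycle_stabilization (δ : ℝ) (hδ : 0 < δ) (ξ : ℝ × ℝ) (φ : Set Pt)
    (hφ : Nprime φ) (hdisj : φ ∩ QbM (3 * δ) ξ = ∅)
    (x : Fin 4 → Pt) (hcyc : IsCycle ξ δ x)
    (hD : Nprime (Set.range x)) (hDφ : Nprime (Set.range x ∪ φ)) :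
    ∀ j : Fin 4, hc (Set.range x ∪ φ) (x j) = hc (Set.range x) (x j) := by
  classical
  have idx1 : ∀ i : Fin 4, i + 1 + 1 = i + 2 := by decide
  have idx2 : ∀ i : Fin 4, i + 3 + 1 = i := by decide
  have idx3 : ∀ i : Fin 4, i ≠ i + 1 := by decide
  have idx4 : ∀ i : Fin 4, i + 2 ≠ i := by decide
  have idxall : ∀ i k : Fin 4, k = i ∨ k = i + 1 ∨ k = i + 2 ∨ k = i + 3 := by decide
  set D : Set Pt := Set.range x with hDdef
  set E : Set Pt := Set.range x ∪ φ with hEdef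
  have hfD : IsGrowthFn D (growthFn D) := growthFn_spec hD.2.2.1
  have hfE : IsGrowthFn E (growthFn E) := growthFn_spec hDφ.2.2.1
  set f := growthFn D with hfdef
  set g := growthFn E with hgdef
  have hmemD : ∀ j, x j ∈ D := fun j => ⟨j, rfl⟩
  have hmemE : ∀ j, x j ∈ E := fun j => Or.inl (hmemD j)
  have hfinD : ∀ j, f (x j) ≠ ⊤ := fun j => hD.2.2.2 _ (hmemD j)
  have hfinE : ∀ j, g (x j) ≠ ⊤ := fun j => hDφ.2.2.2 _ (hmemE j)
  have hinj := hcyc.1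
  have hne : ∀ j k : Fin 4, j ≠ k → x j ≠ x k := fun j k hjk h => hjk (hinj h)
  have hMset : ∀ j, (x j).2 ∈ Mset := fun j => hD.2.1.2.1 _ (hmemD j)
  have hrot : ∀ j : Fin 4, (x j).2 = rot ((x (j+1)).2) := hcyc.2.2.1
  have hv2 : ∀ i : Fin 4, (x (i+2)).2 = -((x i).2) := by
    intro i
    have h : (x i).2 = -((x (i+2)).2) := by
      rw [hrot i, hrot (i+1), idx1 i, rot_rot]
    rw [h, neg_neg]
  have hv3 : ∀ i : Fin 4, (x (i+3)).2 = rot ((x i).2) := by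
    intro i
    have h := hrot (i+3)
    rwa [idx2 i] at h
  set a : Fin 4 → ℝ := fun j => (f (x j)).toReal with hadef
  set p : Fin 4 → ℝ × ℝ := fun j => (x j).1 + a j • (x j).2 with hpdef
  have hpj : ∀ j, hg D (x j) = p j := fun j => rfl
  have htipf : ∀ j, tip f (x j) = p j := fun j => rfl
  have ha_pos : ∀ j, 0 < a j := by
    intro j
    obtain ⟨y, hy, -⟩ := hfD.2.1 (x j) (hmemD j) (hfinD j)
    exact lt_of_le_of_lt (eNorm_nonneg _) hy.2.2
  -- decomposition of the cycle condition (3)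
  have hseg : ∀ i : Fin 4, ∃ c, 0 ≤ c ∧ c ≤ a (i+1) ∧ p i = (x (i+1)).1 + c • (x (i+1)).2 := by
    intro i
    have hI := hcyc.2.2.2.2.1 i
    rw [I, segment_eq_image] at hI
    obtain ⟨θ, hθ, hθeq⟩ := hI
    simp only [Set.mem_Icc] at hθ
    refine ⟨θ * a (i+1), mul_nonneg hθ.1 (ha_pos _).le, ?_, ?_⟩
    · nlinarith [ha_pos (i+1), hθ.1, hθ.2]
    · rw [← hpj i, ← hθeq, hpj (i+1), hpdef]
      match_scalars <;> ring
  have S4 : ∀ j : Fin 4, ∃ b : ℝ, 0 ≤ b ∧ b < a (j+1) ∧ b < a j ∧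
      p j = (x (j+1)).1 + b • (x (j+1)).2 ∧ IsStopNbr D f (x j) (x (j+1)) := by
    intro j
    obtain ⟨b, hb0, hble, hbeq⟩ := hseg j
    obtain ⟨y, hy, -⟩ := hfD.2.1 (x j) (hmemD j) (hfinD j)
    rcases lt_or_eq_of_le hble with hblt | hbeq2
    · -- the tip of x j lies in the open segment of x (j+1)
      have hpmem : p j ∈ seg (x (j+1)).1 (x (j+1)).2 (f (x (j+1))) :=
        ⟨b, hb0, (ENNReal.ofReal_lt_iff_lt_toReal hb0 (hfinD (j+1))).2 hblt, hbeq⟩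
      have hyx : y = x (j+1) := by
        by_contra hne'
        have hdisj' := hfD.1 y hy.1 (x (j+1)) (hmemD (j+1)) hne'
        have hmem2 : p j ∈ seg y.1 y.2 (f y) ∩ seg (x (j+1)).1 (x (j+1)).2 (f (x (j+1))) :=
          ⟨by rw [← htipf j]; exact hy.2.1, hpmem⟩
        rw [hdisj'] at hmem2
        exact hmem2
      rw [hyx] at hy
      have hbnorm : eNorm (p j - (x (j+1)).1) = b := by
        rw [hbeq, add_sub_cancel_left, eNorm_smul_mset (hMset (j+1)), abs_of_nonneg hb0]
      have hba : b < a j := by rw [← hbnorm]; exact hy.2.2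
      exact ⟨b, hb0, hblt, hba, hbeq, hy⟩
    · -- degenerate case: p j = p (j+1); contradiction via parallel lines
      exfalso
      obtain ⟨c, hc0, hcle, hceq⟩ := hseg (j+1)
      rw [idx1 j] at hceq
      have hpp : p j = (x (j+2)).1 + c • (x (j+2)).2 := by
        rw [hbeq, hbeq2]; exact hceq
      rw [hv2 j] at hpp
      have hdiff : (x (j+2)).1 - (x j).1 = (a j + c) • (x j).2 := by
        have hpj' : p j = (x j).1 + a j • (x j).2 := rfl
        rw [hpj'] at hpp
        linear_combination (norm := module) -hpp
      exact badDir_contra hD.2.1 (hmemD (j+2)) (hmemD j)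
        (hne _ _ (idx4 j)) (hMset j) (ne_of_gt (by linarith [ha_pos j])) hdiff
  choose b hb0 hb1 hb2 hbeq hstop using S4
  have haδ : ∀ j, a j ≤ δ := by
    intro j
    have h1 : ‖p j - (x j).1‖ = a j := by
      rw [hpdef]; simp only [add_sub_cancel_left]
      rw [norm_smul_mset (hMset j), abs_of_nonneg (ha_pos j).le]
    have h2 : ‖p j - (x j).1‖ ≤ ‖p j - ξ‖ + ‖ξ - (x j).1‖ := norm_sub_le_norm_sub_add_norm_sub _ _ _
    have hQ1 : ‖(x j).1 - ξ‖ ≤ δ/2 := hcyc.2.1 j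
    have hQ2 : ‖p j - ξ‖ ≤ δ/2 := by rw [← hpj j]; exact hcyc.2.2.2.1 j
    rw [← norm_neg (ξ - (x j).1), neg_sub] at h2
    linarith
  -- Claim B : no point of the cycle grows less in the union than in the cycle
  have hB : ∀ j : Fin 4, a j ≤ (g (x j)).toReal := by
    intro j
    by_contra hlt'
    push_neg at hlt'
    obtain ⟨y, hy, -⟩ := hfE.2.1 (x j) (hmemE j) (hfinE j)
    set gj := (g (x j)).toReal with hgjdef
    have hgj_pos : 0 < gj := lt_of_le_of_lt (eNorm_nonneg _) hy.2.2
    have htipg : tip g (x j) = (x j).1 + gj • (x j).2 := rfl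
    -- the tentative tip stays in the small square
    have hq : ‖tip g (x j) - ξ‖ ≤ δ/2 := by
      have key : tip g (x j) - ξ =
          (1 - gj / a j) • ((x j).1 - ξ) + (gj / a j) • (p j - ξ) := by
        rw [htipg, hpdef]
        have ha' : a j ≠ 0 := (ha_pos j).ne'
        match_scalars <;> field_simp <;> ring
      rw [key]
      have hQ1 : ‖(x j).1 - ξ‖ ≤ δ/2 := hcyc.2.1 j
      have hQ2 : ‖p j - ξ‖ ≤ δ/2 := by rw [← hpj j]; exact hcyc.2.2.2.1 j
      have hlam0 : 0 ≤ gj / a j := div_nonneg hgj_pos.le (ha_pos j).le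
      have hlam1 : gj / a j ≤ 1 := by
        rw [div_le_one (ha_pos j)]; exact hlt'.le
      calc ‖(1 - gj / a j) • ((x j).1 - ξ) + (gj / a j) • (p j - ξ)‖
          ≤ ‖(1 - gj / a j) • ((x j).1 - ξ)‖ + ‖(gj / a j) • (p j - ξ)‖ := norm_add_le _ _
        _ = (1 - gj / a j) * ‖(x j).1 - ξ‖ + (gj / a j) * ‖p j - ξ‖ := by
            rw [norm_smul, norm_smul, Real.norm_eq_abs, Real.norm_eq_abs,
              abs_of_nonneg (by linarith), abs_of_nonneg hlam0]
        _ ≤ (1 - gj / a j) * (δ/2) + (gj / a j) * (δ/2) := by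
            apply add_le_add
            · exact mul_le_mul_of_nonneg_left hQ1 (by linarith)
            · exact mul_le_mul_of_nonneg_left hQ2 hlam0
        _ = δ/2 := by ring
    -- the stopping neighbor is in the cycle
    have hyD : y ∈ D := by
      rcases hy.1 with h | h
      · exact h
      · exfalso
        have hd1 : ‖y.1 - tip g (x j)‖ ≤ eNorm (tip g (x j) - y.1) := by
          rw [← norm_neg, neg_sub]; exact norm_le_eNorm _
        have hd2 : ‖y.1 - ξ‖ ≤ ‖y.1 - tip g (x j)‖ + ‖tip g (x j) - ξ‖ :=
          norm_sub_le_norm_sub_add_norm_sub _ _ _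
        have hball : ‖y.1 - ξ‖ ≤ 3 * δ / 2 := by
          have := hy.2.2
          have haj := haδ j
          linarith
        have : y ∈ φ ∩ QbM (3 * δ) ξ := ⟨h, hball⟩
        rw [hdisj] at this
        exact this
    obtain ⟨k, hk⟩ := hyD
    subst hk
    obtain ⟨t, ht0, htlt, hteq⟩ := hy.2.1
    rw [htipg] at hteq
    rcases idxall j k with hkj | hkj | hkj | hkj
    · -- k = j : impossible
      rw [hkj] at hteq htlt
      have := smul_cancel_mset (hMset j) (add_left_cancel hteq)
      rw [← this] at htlt
      exact absurd ((ENNReal.ofReal_lt_iff_lt_toReal hgj_pos.le (hfinE j)).1 htlt) (lt_irrefl _)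
    · -- k = j+1 : forces gj = a j, contradiction
      subst hkj
      have h2 : (x j).1 + a j • rot ((x (j+1)).2) = (x (j+1)).1 + b j • (x (j+1)).2 := by
        rw [← hrot j]; exact hbeq j
      have h1 : (x j).1 + gj • rot ((x (j+1)).2) = (x (j+1)).1 + t • (x (j+1)).2 := by
        rw [← hrot j]; exact hteq
      have := (perp_param (hMset (j+1)) h1 h2).1
      exact absurd this (ne_of_lt hlt')
    · -- k = j+2 : parallel lines, badDirs contradiction
      subst hkj
      rw [hv2 j] at hteq
      have hdiff : (x (j+2)).1 - (x j).1 = (gj + t) • (x j).2 := by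
        linear_combination (norm := module) -hteq
      exact badDir_contra hD.2.1 (hmemD (j+2)) (hmemD j)
        (hne _ _ (idx4 j)) (hMset j) (ne_of_gt (by linarith)) hdiff
    · -- k = j+3 : forces a (j+3) < gj = b (j+3) < a (j+3)
      subst hkj
      rw [hv3 j] at hteq
      have h1 : (x (j+3)).1 + t • rot ((x j).2) = (x j).1 + gj • (x j).2 := hteq.symm
      have h2 : (x (j+3)).1 + a (j+3) • rot ((x j).2) = (x j).1 + b (j+3) • (x j).2 := by
        have := hbeq (j+3)
        rw [idx2 j] at this
        rw [← hv3 j]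
        exact this
      obtain ⟨hta, hgb⟩ := perp_param (hMset j) h1 h2
      have hdist := hy.2.2
      have htipdiff : tip g (x j) - (x (j+3)).1 = a (j+3) • rot ((x j).2) := by
        rw [htipg, ← hta]
        linear_combination (norm := module) hteq
      rw [htipdiff, eNorm_smul_mset (rot_mset (hMset j)),
        abs_of_nonneg (ha_pos (j+3)).le] at hdist
      -- hdist : a (j+3) < gj;  hgb : gj = b (j+3);  hb2 (j+3) : b (j+3) < a (j+3)
      have := hb2 (j+3)
      rw [← hgb] at this
      linarith
  -- Claim A : growth values agree on the cycle
  have hA : ∀ j : Fin 4, (g (x j)).toReal = a j := by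
    intro j
    refine le_antisymm ?_ (hB j)
    by_contra h
    push_neg at h
    have hp1 : p j ∈ seg (x j).1 (x j).2 (g (x j)) :=
      ⟨a j, (ha_pos j).le, (ENNReal.ofReal_lt_iff_lt_toReal (ha_pos j).le (hfinE j)).2 h, rfl⟩
    have hp2 : p j ∈ seg (x (j+1)).1 (x (j+1)).2 (g (x (j+1))) :=
      ⟨b j, hb0 j, (ENNReal.ofReal_lt_iff_lt_toReal (hb0 j) (hfinE (j+1))).2
        (lt_of_lt_of_le (hb1 j) (hB (j+1))), hbeq j⟩
    have hdisj' := hfE.1 (x j) (hmemE j) (x (j+1)) (hmemE (j+1)) (hne _ _ (idx3 j))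
    have : p j ∈ seg (x j).1 (x j).2 (g (x j)) ∩
        seg (x (j+1)).1 (x (j+1)).2 (g (x (j+1))) := ⟨hp1, hp2⟩
    rw [hdisj'] at this
    exact this
  -- conclusion
  intro j
  have htipg : tip g (x j) = p j := by
    show (x j).1 + (g (x j)).toReal • (x j).2 = p j
    rw [hA j]
  have hstopE : IsStopNbr E g (x j) (x (j+1)) := by
    refine ⟨hmemE (j+1), ⟨b j, hb0 j, ?_, ?_⟩, ?_⟩
    · exact (ENNReal.ofReal_lt_iff_lt_toReal (hb0 j) (hfinE (j+1))).2
        (lt_of_lt_of_le (hb1 j) (hB (j+1)))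
    · rw [htipg]; exact hbeq j
    · rw [htipg, hbeq j, add_sub_cancel_left, eNorm_smul_mset (hMset (j+1)),
        abs_of_nonneg (hb0 j), hA j]
      exact hb2 j
  rw [hc_eq (hmemE j) hfE (hfinE j) hstopE, hc_eq (hmemD j) hfD (hfinD j) (hstop j)]

end Lilypond
end
end
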